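/- Let Λ be a k-dimensional Young diagram that is non-exceptional, i.e., for every 1 ≤ i ≤ k there exists λ ∈ Λ with λ_i ≠ 0 and λ ≠ e_i. Then the number of precorner cells of Λ is at least k, where a non-corner cell λ ∈ Λ is a precorner cell if for every 1 ≤ i ≤ k, either λ + e_i ∉ Λ or λ + e_i is a corner cell of Λ. -/

import Mathlib

/-! Auxiliary definitions and lemmas for `precorner_count_ge_dimension`. -/

/-- Cyclic base-`B` lexicographic encoding of `c : Fin k → ℕ`, with highest digit
being coordinate `i`, then `i+1`, etc. -/
def pcEnc (k B : ℕ) (i : Fin k) (c : Fin k → ℕ) : ℕ :=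
  ∑ q : Fin k, c (i + q) * B ^ (k - 1 - q.val)

lemma pc_geom (B : ℕ) (hB : 1 ≤ B) : ∀ n : ℕ,
    ∑ r ∈ Finset.range n, (B - 1) * B ^ r = B ^ n - 1 := by
  intro n
  induction n with
  | zero => simp
  | succ n ih =>
      rw [Finset.sum_range_succ, ih]
      have h1 : 1 ≤ B ^ n := Nat.one_le_pow _ _ (by omega)
      have h2 : B ^ (n+1) = B * B ^ n := by ring
      have h3 : (B - 1) * B ^ n = B * B ^ n - B ^ n := by
        rw [Nat.sub_mul, one_mul]
      have h4 : B ^ n ≤ B * B ^ n := Nat.le_mul_of_pos_left _ (by omega)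
      omega

/-- Lex comparison lemma: if `d` dominates `c` except possibly a deficit of 1 at
coordinate `a`, has a strict gain at `l`, and `l` comes strictly before `a` in the
cyclic order starting at `i`, then the encoding of `d` is strictly larger. -/
lemma pcEnc_lt (k B : ℕ) (hB : 2 ≤ B) (i a l : Fin k) (c d : Fin k → ℕ)
    (hlt : (l - i : Fin k).val < (a - i : Fin k).val)
    (h1 : ∀ t, t ≠ a → c t ≤ d t) (h2 : c l < d l) (h3 : c a ≤ d a + 1) :
    pcEnc k B i c < pcEnc k B i d := by
  haveI : NeZero k := ⟨i.pos.ne'⟩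
  set ql : Fin k := l - i with hql
  set qa : Fin k := a - i with hqa
  have hil : i + ql = l := by rw [hql, add_comm, sub_add_cancel]
  have hia : i + qa = a := by rw [hqa, add_comm, sub_add_cancel]
  have hqne : ql ≠ qa := fun h => by rw [h] at hlt; omega
  set w : Fin k → ℕ := fun q => B ^ (k - 1 - q.val) with hw
  have key : ∀ q : Fin k,
      c (i + q) * w q + (if q = ql then w q else 0)
        ≤ d (i + q) * w q + (if q = qa then w q else 0) := by
    intro q
    by_cases hq : q = ql
    · subst hq
      rw [if_pos rfl, if_neg hqne, hil, add_zero]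
      have : (c l + 1) * w ql ≤ d l * w ql := Nat.mul_le_mul_right _ (by omega)
      nlinarith [this]
    · rw [if_neg hq]
      by_cases hq' : q = qa
      · subst hq'
        rw [if_pos rfl, hia]
        have : c a * w qa ≤ (d a + 1) * w qa := Nat.mul_le_mul_right _ h3
        nlinarith [this]
      · rw [if_neg hq', add_zero, add_zero]
        have hne : i + q ≠ a := by
          intro h; apply hq'; rwa [← hia, add_right_inj] at h
        exact Nat.mul_le_mul_right _ (h1 _ hne)
  have hsum := Finset.sum_le_sum (fun q (_ : q ∈ Finset.univ) => key q)
  rw [Finset.sum_add_distrib, Finset.sum_add_distrib,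
      Finset.sum_ite_eq' Finset.univ ql w, Finset.sum_ite_eq' Finset.univ qa w,
      if_pos (Finset.mem_univ _), if_pos (Finset.mem_univ _)] at hsum
  have hwlt : w qa < w ql := by
    rw [hw]
    have := qa.isLt
    exact Nat.pow_lt_pow_right (by omega) (by omega)
  have hc : pcEnc k B i c = ∑ q : Fin k, c (i + q) * w q := rfl
  have hd : pcEnc k B i d = ∑ q : Fin k, d (i + q) * w q := rfl
  omega

/-- Leading-digit comparison: if all values of `c` are `< B` and `d` beats `c` at
coordinate `i`, then `d` has strictly larger encoding based at `i`. -/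
lemma pcEnc_lead (k B : ℕ) (hB : 2 ≤ B) (i : Fin k) (c d : Fin k → ℕ)
    (hc : ∀ t, c t < B) (h : c i < d i) :
    pcEnc k B i c < pcEnc k B i d := by
  haveI : NeZero k := ⟨i.pos.ne'⟩
  set w : Fin k → ℕ := fun q => B ^ (k - 1 - q.val) with hw
  have hsplit : pcEnc k B i c
      = c (i + 0) * w 0 + ∑ q ∈ Finset.univ.erase (0 : Fin k), c (i + q) * w q :=
    (Finset.add_sum_erase Finset.univ (fun q : Fin k => c (i + q) * w q)
      (Finset.mem_univ (0 : Fin k))).symm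
  have hrest : ∑ q ∈ Finset.univ.erase (0 : Fin k), c (i + q) * w q ≤ B ^ (k-1) - 1 := by
    have step1 : ∑ q ∈ Finset.univ.erase (0 : Fin k), c (i + q) * w q
        ≤ ∑ q ∈ Finset.univ.erase (0 : Fin k), (B - 1) * w q :=
      Finset.sum_le_sum (fun q _ => Nat.mul_le_mul_right _ (by have := hc (i+q); omega))
    have hval : ∀ q : Fin k, q ∈ Finset.univ.erase 0 → 1 ≤ q.val ∧ q.val < k := by
      intro q hq
      have hq0 : q ≠ 0 := (Finset.mem_erase.mp hq).1
      have : q.val ≠ 0 := fun h => hq0 (Fin.ext (by simp [h]))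
      exact ⟨by omega, q.isLt⟩
    have hinj : ∀ x ∈ Finset.univ.erase (0 : Fin k), ∀ y ∈ Finset.univ.erase (0 : Fin k),
        k - 1 - x.val = k - 1 - y.val → x = y := by
      intro x hx y hy hxy
      have h1 := hval x hx; have h2 := hval y hy
      exact Fin.ext (by omega)
    have himg : ∑ q ∈ Finset.univ.erase (0 : Fin k), (B - 1) * w q
        = ∑ r ∈ (Finset.univ.erase (0:Fin k)).image (fun q => k - 1 - q.val),
            (B - 1) * B ^ r := by
      rw [Finset.sum_image hinj]
    have hsub : (Finset.univ.erase (0:Fin k)).image (fun q => k - 1 - q.val)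
        ⊆ Finset.range (k - 1) := by
      intro r hr
      obtain ⟨q, hq, rfl⟩ := Finset.mem_image.mp hr
      have := hval q hq
      exact Finset.mem_range.mpr (by omega)
    calc ∑ q ∈ Finset.univ.erase (0 : Fin k), c (i + q) * w q
        ≤ ∑ r ∈ (Finset.univ.erase (0:Fin k)).image (fun q => k - 1 - q.val),
            (B - 1) * B ^ r := by rw [← himg]; exact step1
      _ ≤ ∑ r ∈ Finset.range (k - 1), (B - 1) * B ^ r :=
            Finset.sum_le_sum_of_subset hsub
      _ = B ^ (k-1) - 1 := pc_geom B (by omega) _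
  have hd : d i * w 0 ≤ pcEnc k B i d := by
    have h0 : d (i + 0) * w 0 ≤ ∑ q : Fin k, d (i + q) * w q :=
      Finset.single_le_sum (f := fun q : Fin k => d (i + q) * w q)
        (fun q _ => Nat.zero_le _) (Finset.mem_univ (0 : Fin k))
    simpa [pcEnc] using h0
  have hw0 : w 0 = B ^ (k - 1) := by simp [hw]
  have hpow : 1 ≤ B ^ (k-1) := Nat.one_le_pow _ _ (by omega)
  have hci : c (i + 0) = c i := by rw [add_zero]
  have hdi : d (i + 0) = d i := by rw [add_zero]
  have hmul : (c i + 1) * B ^ (k-1) ≤ d i * B ^ (k-1) :=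
    Nat.mul_le_mul_right _ (by omega)
  rw [hw0] at hd
  calc pcEnc k B i c
      = c i * B ^ (k-1) + ∑ q ∈ Finset.univ.erase (0 : Fin k), c (i + q) * w q := by
        rw [hsplit, hci, hw0]
    _ ≤ c i * B ^ (k-1) + (B ^ (k-1) - 1) := by omega
    _ < (c i + 1) * B ^ (k-1) := by
        have hx : (c i + 1) * B ^ (k-1) = c i * B ^ (k-1) + B ^ (k-1) := by ring
        omega
    _ ≤ d i * B ^ (k-1) := hmul
    _ ≤ pcEnc k B i d := hd

/-- Value of subtraction in `Fin k`, as a piecewise formula. -/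
lemma pc_sub_val {k : ℕ} (a b : Fin k) :
    (a - b).val = if b.val ≤ a.val then a.val - b.val else a.val + k - b.val := by
  rw [Fin.sub_def]
  have ha := a.isLt
  have hb := b.isLt
  split_ifs with h
  · show (k - b.val + a.val) % k = a.val - b.val
    have : k - b.val + a.val = k + (a.val - b.val) := by omega
    rw [this, Nat.add_mod_left]
    exact Nat.mod_eq_of_lt (by omega)
  · show (k - b.val + a.val) % k = a.val + k - b.val
    have h1 : k - b.val + a.val < k := by omega
    rw [Nat.mod_eq_of_lt h1]
    omega

lemma pc_sub_val_injective {k : ℕ} (j : Fin k) {a b : Fin k}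
    (h : (a - j : Fin k).val = (b - j : Fin k).val) : a = b := by
  have ha := a.isLt
  have hb := b.isLt
  have hj := j.isLt
  rw [pc_sub_val, pc_sub_val] at h
  split_ifs at h <;> exact Fin.ext (by omega)

lemma pc_pos_contra {k : ℕ} (i j l : Fin k) (hij : i ≠ j) (hli : l ≠ i) (hlj : l ≠ j)
    (h1 : (i - j : Fin k).val < (l - j : Fin k).val)
    (h2 : (j - i : Fin k).val < (l - i : Fin k).val) : False := by
  have hij' : i.val ≠ j.val := fun h => hij (Fin.ext h)
  have hli' : l.val ≠ i.val := fun h => hli (Fin.ext h)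
  have hlj' : l.val ≠ j.val := fun h => hlj (Fin.ext h)
  have hi := i.isLt; have hj := j.isLt; have hl := l.isLt
  rw [pc_sub_val, pc_sub_val] at h1 h2
  split_ifs at h1 h2 <;> omega

/-- If `Λ` is a non-exceptional `k`-dimensional Young diagram, then `Λ` has at least `k`
precorner cells. Here a non-corner cell `λ ∈ Λ` is a precorner cell if for every `i`,
either `λ + e_i ∉ Λ` or `λ + e_i` is a corner cell of `Λ`. -/
theorem precorner_count_ge_dimension
    (k : ℕ) (Λ : Finset (Fin k → ℕ))
    (hdc : ∀ μ ∈ Λ, ∀ lam : Fin k → ℕ, lam ≤ μ → lam ∈ Λ)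
    (hdim : ∀ i : Fin k, ∃ lam ∈ Λ, lam i ≠ 0)
    (hnonexc : ∀ i : Fin k, ∃ lam ∈ Λ, lam i ≠ 0 ∧ lam ≠ Pi.single i 1) :
    k ≤ Set.ncard {lam : Fin k → ℕ | lam ∈ Λ ∧
      ¬ (∀ ν ∈ Λ, lam ≤ ν → ν = lam) ∧
      ∀ i : Fin k, lam + Pi.single i 1 ∉ Λ ∨
        (lam + Pi.single i 1 ∈ Λ ∧ ∀ ν ∈ Λ, lam + Pi.single i 1 ≤ ν → ν = lam + Pi.single i 1)} := by
  classical
  -- `S` : non-corner cells of `Λ`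
  set S : Finset (Fin k → ℕ) := Λ.filter (fun c => ¬ ∀ ν ∈ Λ, c ≤ ν → ν = c) with hSdef
  have hSΛ : ∀ {c}, c ∈ S → c ∈ Λ := fun hc => (Finset.mem_filter.mp hc).1
  have hSnm : ∀ {c}, c ∈ S → ∃ ν ∈ Λ, c ≤ ν ∧ ν ≠ c := by
    intro c hc
    have h := (Finset.mem_filter.mp hc).2
    push_neg at h
    exact h
  have hSmem : ∀ {c}, c ∈ Λ → (∃ ν ∈ Λ, c ≤ ν ∧ ν ≠ c) → c ∈ S := by
    intro c hcΛ ⟨ν, hν, hle, hne⟩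
    refine Finset.mem_filter.mpr ⟨hcΛ, fun h => hne (h ν hν hle)⟩
  -- extension to maximal elements of `S`
  have hext : ∀ x ∈ S, ∃ c, (c ∈ S ∧ ∀ ν ∈ S, c ≤ ν → ν = c) ∧ x ≤ c := by
    intro x hx
    obtain ⟨c, hc, hmax⟩ := (S.filter (x ≤ ·)).exists_maximal
      ⟨x, Finset.mem_filter.mpr ⟨hx, le_refl x⟩⟩
    obtain ⟨hcS, hxc⟩ := Finset.mem_filter.mp hc
    refine ⟨c, ⟨hcS, ?_⟩, hxc⟩
    intro ν hν hle
    by_contra hne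
    exact hne (le_antisymm (hmax (Finset.mem_filter.mpr ⟨hν, le_trans hxc hle⟩) hle) hle)
  -- for each coordinate, S has an element with nonzero value there
  have hS_i : ∀ i : Fin k, ∃ s ∈ S, 1 ≤ s i := by
    intro i
    obtain ⟨lam, hlam, hi0, hne1⟩ := hnonexc i
    by_cases hmax : ∀ ν ∈ Λ, lam ≤ ν → ν = lam
    · -- lam is a corner; step down
      by_cases h2 : 2 ≤ lam i
      · refine ⟨lam - Pi.single i 1, ?_, ?_⟩
        · refine hSmem (hdc lam hlam _ (fun t => Nat.sub_le _ _)) ⟨lam, hlam, ?_, ?_⟩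
          · intro t; exact Nat.sub_le _ _
          · intro h
            have := congrFun h i
            simp [Pi.single_eq_same] at this
            omega
        · simp [Pi.single_eq_same]; omega
      · -- lam i = 1, and some other coordinate is nonzero
        have hi1 : lam i = 1 := by omega
        have : ∃ j, j ≠ i ∧ 1 ≤ lam j := by
          by_contra h
          push_neg at h
          apply hne1
          funext t
          by_cases ht : t = i
          · subst ht; simp [Pi.single_eq_same, hi1]
          · have := h t ht; simp [Pi.single_eq_of_ne ht]; omega
        obtain ⟨j, hji, hj1⟩ := this
        refine ⟨lam - Pi.single j 1, ?_, ?_⟩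
        · refine hSmem (hdc lam hlam _ (fun t => Nat.sub_le _ _)) ⟨lam, hlam, ?_, ?_⟩
          · intro t; exact Nat.sub_le _ _
          · intro h
            have := congrFun h j
            simp [Pi.single_eq_same] at this
            omega
        · simp [Pi.single_eq_of_ne (Ne.symm hji)]; omega
    · exact ⟨lam, Finset.mem_filter.mpr ⟨hlam, hmax⟩, by omega⟩
  -- coordinate maxima over S
  set m : Fin k → ℕ := fun i => S.sup (fun s => s i) with hm
  have hub : ∀ i : Fin k, ∀ s ∈ S, s i ≤ m i := by
    intro i s hs
    simp only [hm]
    exact Finset.le_sup (f := fun s => s i) hs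
  have hm_pos : ∀ i : Fin k, 1 ≤ m i := by
    intro i
    obtain ⟨s, hs, h1⟩ := hS_i i
    exact le_trans h1 (hub i s hs)
  have hach : ∀ i : Fin k, ∃ c, (c ∈ S ∧ ∀ ν ∈ S, c ≤ ν → ν = c) ∧ c i = m i := by
    intro i
    obtain ⟨s0, hs0, _⟩ := hS_i i
    obtain ⟨b, hb, hbs⟩ := Finset.exists_mem_eq_sup S ⟨s0, hs0⟩ (fun s => s i)
    obtain ⟨c, hcM, hbc⟩ := hext b hb
    refine ⟨c, hcM, le_antisymm (hub i c hcM.1) ?_⟩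
    have hmb : m i = b i := by simp only [hm]; exact hbs
    calc m i = b i := hmb
      _ ≤ c i := hbc i
  -- the base for the encodings
  set B : ℕ := 2 + S.sup (fun s => Finset.univ.sup s) with hB
  have hB2 : 2 ≤ B := Nat.le_add_right 2 _
  have hBb : ∀ s ∈ S, ∀ t, s t < B := by
    intro s hs t
    have h1 : s t ≤ Finset.univ.sup s := Finset.le_sup (Finset.mem_univ t)
    have h2 : Finset.univ.sup s ≤ S.sup (fun s => Finset.univ.sup s) := Finset.le_sup hs
    omega
  -- choose the cyclic-lex maximal element of M for each i
  have hchoice : ∀ i : Fin k, ∃ c, (c ∈ S ∧ ∀ ν ∈ S, c ≤ ν → ν = c) ∧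
      ∀ d, (d ∈ S ∧ ∀ ν ∈ S, d ≤ ν → ν = d) → pcEnc k B i d ≤ pcEnc k B i c := by
    intro i
    classical
    set Mset : Finset (Fin k → ℕ) := S.filter (fun c => ∀ ν ∈ S, c ≤ ν → ν = c) with hMset
    have hMne : Mset.Nonempty := by
      obtain ⟨c, hcM, _⟩ := hach i
      exact ⟨c, Finset.mem_filter.mpr hcM⟩
    obtain ⟨c, hc, hmax⟩ := Finset.exists_max_image Mset (pcEnc k B i) hMne
    obtain ⟨hcS, hcMax⟩ := Finset.mem_filter.mp hc
    exact ⟨c, ⟨hcS, hcMax⟩, fun d hd => hmax d (Finset.mem_filter.mpr hd)⟩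
  choose f hfM hfmax using hchoice
  -- the leading digit of f i is m i
  have hlead : ∀ i : Fin k, (f i) i = m i := by
    intro i
    refine le_antisymm (hub i _ (hfM i).1) ?_
    by_contra hlt
    push_neg at hlt
    obtain ⟨c, hcM, hci⟩ := hach i
    have := pcEnc_lead k B hB2 i (f i) c (hBb _ (hfM i).1) (by omega)
    have h2 := hfmax i c hcM
    omega
  -- the key structural property of a maximal element of S
  have hstar : ∀ c, (c ∈ S ∧ ∀ ν ∈ S, c ≤ ν → ν = c) →
      ∃ l : Fin k, ∀ j, j ≠ l → 1 ≤ c j → c + Pi.single l 1 - Pi.single j 1 ∈ S := by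
    intro c ⟨hcS, _⟩
    obtain ⟨ν, hνΛ, hle, hne⟩ := hSnm hcS
    have : ∃ l, c l < ν l := by
      by_contra h
      push_neg at h
      exact hne (le_antisymm h hle)
    obtain ⟨l, hl⟩ := this
    refine ⟨l, fun j hjl hj1 => ?_⟩
    have hwle : c + Pi.single l 1 ≤ ν := by
      intro t
      by_cases ht : t = l
      · subst ht; simp [Pi.single_eq_same]; omega
      · simp [Pi.single_eq_of_ne ht]; exact hle t
    have hwΛ : c + Pi.single l 1 ∈ Λ := hdc ν hνΛ _ hwle
    have hμle : c + Pi.single l 1 - Pi.single j 1 ≤ c + Pi.single l 1 :=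
      fun t => Nat.sub_le _ _
    refine hSmem (hdc _ hwΛ _ hμle) ⟨c + Pi.single l 1, hwΛ, hμle, ?_⟩
    intro h
    have := congrFun h j
    simp [Pi.single_eq_of_ne hjl, Pi.single_eq_same] at this
    omega
  -- injectivity of f
  have hinj : Function.Injective f := by
    intro i j hij
    by_contra hne
    have hcj : f i j = m j := by rw [hij]; exact hlead j
    have hci : f i i = m i := hlead i
    obtain ⟨l, hl⟩ := hstar (f i) (hfM i)
    -- l ≠ i
    have hli : l ≠ i := by
      intro h
      have hjl : j ≠ l := by rw [h]; exact fun hji => hne hji.symm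
      have hμ : f i + Pi.single l 1 - Pi.single j 1 ∈ S :=
        hl j hjl (by rw [hcj]; exact hm_pos j)
      have hb := hub l _ hμ
      have hcoord : (f i + Pi.single l 1 - Pi.single j 1 : Fin k → ℕ) l = f i l + 1 := by
        simp [Pi.sub_apply, Pi.add_apply, Pi.single_eq_same,
          Pi.single_eq_of_ne (fun e : l = j => hjl e.symm)]
      have hml : f i l = m l := by rw [h]; exact hci
      omega
    -- l ≠ j
    have hlj : l ≠ j := by
      intro h
      have hμ : f i + Pi.single l 1 - Pi.single i 1 ∈ S :=
        hl i (fun e => hli e.symm) (by rw [hci]; exact hm_pos i)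
      have hb := hub l _ hμ
      have hcoord : (f i + Pi.single l 1 - Pi.single i 1 : Fin k → ℕ) l = f i l + 1 := by
        simp [Pi.sub_apply, Pi.add_apply, Pi.single_eq_same,
          Pi.single_eq_of_ne (fun e : l = i => hli e)]
      have hml : f i l = m l := by rw [h]; exact hcj
      omega
    -- first dominating element : above f i + e_l - e_i
    have hμ1 : f i + Pi.single l 1 - Pi.single i 1 ∈ S :=
      hl i (fun e => hli e.symm) (by rw [hci]; exact hm_pos i)
    obtain ⟨d, hdM, hdge⟩ := hext _ hμ1
    have e2 : (f i + Pi.single l 1 - Pi.single i 1 : Fin k → ℕ) l = f i l + 1 := by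
      simp [Pi.sub_apply, Pi.add_apply, Pi.single_eq_same, Pi.single_eq_of_ne hli]
    have e3 : (f i + Pi.single l 1 - Pi.single i 1 : Fin k → ℕ) i = f i i - 1 := by
      simp [Pi.sub_apply, Pi.add_apply, Pi.single_eq_same,
        Pi.single_eq_of_ne (fun e : i = l => hli e.symm)]
    have e1 : ∀ t, t ≠ i → f i t ≤ (f i + Pi.single l 1 - Pi.single i 1 : Fin k → ℕ) t := by
      intro t ht
      by_cases htl : t = l
      · subst htl; omega
      · simp [Pi.sub_apply, Pi.add_apply, Pi.single_eq_of_ne htl, Pi.single_eq_of_ne ht]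
    have key1 : (i - j : Fin k).val < (l - j : Fin k).val := by
      rcases lt_trichotomy ((l - j : Fin k)).val ((i - j : Fin k)).val with hlt | heq | hgt
      · exfalso
        have hp := pcEnc_lt k B hB2 j i l (f i) d hlt
          (fun t ht => le_trans (e1 t ht) (hdge t))
          (by have hh := hdge l; rw [e2] at hh
              have hh' : f i l + 1 ≤ d l := hh; omega)
          (by have hh := hdge i; rw [e3] at hh
              have hh' : f i i - 1 ≤ d i := hh
              have h1 := hm_pos i; omega)
        have hmax := hfmax j d hdM
        rw [← hij] at hmax
        omega
      · exfalso
        exact hli (pc_sub_val_injective j heq)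
      · exact hgt
    -- second dominating element : above f i + e_l - e_j
    have hμ2 : f i + Pi.single l 1 - Pi.single j 1 ∈ S :=
      hl j (fun e => hlj e.symm) (by rw [hcj]; exact hm_pos j)
    obtain ⟨d', hdM', hdge'⟩ := hext _ hμ2
    have e2' : (f i + Pi.single l 1 - Pi.single j 1 : Fin k → ℕ) l = f i l + 1 := by
      simp [Pi.sub_apply, Pi.add_apply, Pi.single_eq_same, Pi.single_eq_of_ne hlj]
    have e3' : (f i + Pi.single l 1 - Pi.single j 1 : Fin k → ℕ) j = f i j - 1 := by
      simp [Pi.sub_apply, Pi.add_apply, Pi.single_eq_same,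
        Pi.single_eq_of_ne (fun e : j = l => hlj e.symm)]
    have e1' : ∀ t, t ≠ j → f i t ≤ (f i + Pi.single l 1 - Pi.single j 1 : Fin k → ℕ) t := by
      intro t ht
      by_cases htl : t = l
      · subst htl; omega
      · simp [Pi.sub_apply, Pi.add_apply, Pi.single_eq_of_ne htl, Pi.single_eq_of_ne ht]
    have key2 : (j - i : Fin k).val < (l - i : Fin k).val := by
      rcases lt_trichotomy ((l - i : Fin k)).val ((j - i : Fin k)).val with hlt | heq | hgt
      · exfalso
        have hp := pcEnc_lt k B hB2 i j l (f i) d' hlt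
          (fun t ht => le_trans (e1' t ht) (hdge' t))
          (by have hh := hdge' l; rw [e2'] at hh
              have hh' : f i l + 1 ≤ d' l := hh; omega)
          (by have hh := hdge' j; rw [e3'] at hh
              have hh' : f i j - 1 ≤ d' j := hh
              have h1 := hm_pos j; omega)
        have hmax := hfmax i d' hdM'
        omega
      · exfalso
        exact hlj (pc_sub_val_injective i heq)
      · exact hgt
    exact pc_pos_contra i j l hne hli hlj key1 key2
  -- every f i is a precorner cell
  set P : Set (Fin k → ℕ) := {lam : Fin k → ℕ | lam ∈ Λ ∧
      ¬ (∀ ν ∈ Λ, lam ≤ ν → ν = lam) ∧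
      ∀ i : Fin k, lam + Pi.single i 1 ∉ Λ ∨
        (lam + Pi.single i 1 ∈ Λ ∧ ∀ ν ∈ Λ, lam + Pi.single i 1 ≤ ν → ν = lam + Pi.single i 1)}
    with hP
  have hfP : ∀ i : Fin k, f i ∈ P := by
    intro i
    obtain ⟨hfS, hfMax⟩ := hfM i
    obtain ⟨hfΛ, hfnm⟩ := Finset.mem_filter.mp hfS
    refine ⟨hfΛ, hfnm, ?_⟩
    intro t
    by_cases ht : f i + Pi.single t 1 ∈ Λ
    · refine Or.inr ⟨ht, ?_⟩
      intro ν hν hle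
      by_contra hne'
      have hwS : f i + Pi.single t 1 ∈ S := hSmem ht ⟨ν, hν, hle, hne'⟩
      have := hfMax _ hwS (by intro u; simp [Pi.add_apply])
      have := congrFun this t
      simp [Pi.add_apply, Pi.single_eq_same] at this
    · exact Or.inl ht
  -- conclude by counting
  have hPfin : P.Finite := Set.Finite.subset Λ.finite_toSet (fun x hx => hx.1)
  have himg : f '' Set.univ ⊆ P := by
    rintro _ ⟨i, -, rfl⟩
    exact hfP i
  calc k = Nat.card (Fin k) := by simp
    _ = (Set.univ : Set (Fin k)).ncard := (Set.ncard_univ _).symm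
    _ = (f '' Set.univ).ncard := (Set.ncard_image_of_injective _ hinj).symm
    _ ≤ P.ncard := Set.ncard_le_ncard himg hPfin
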